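/- arXiv:2512.02042 — 3 statements merged into one kernel-verified Lean document; each statement's English description precedes it below -/
import Mathlib

section
/- Let m ≥ 1, c ∈ ℂ^m, and let g : ℂ^m → ℂ be an entire function that depends only on the differences, i.e., g(z) = G(z₂-z₁, z₃-z₂, …, z_m-z_{m-1}) for some entire G : ℂ^{m-1} → ℂ, and suppose g(z+c) - g(z) = (c₁+⋯+c_m)/(2m) for all z. Then f(z) = 1 - (-(z₁+⋯+z_m)/(2m) + g(z))² satisfies (∑_{j=1}^m ∂f/∂z_j(z))² + f(z+c) = 1 for all z ∈ ℂ^m. -/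
open Complex

theorem stmt4
    (m : ℕ) (hm : 1 ≤ m) (c : Fin m → ℂ)
    (g : (Fin m → ℂ) → ℂ) (hg : Differentiable ℂ g)
    (G : (Fin (m - 1) → ℂ) → ℂ) (hG : Differentiable ℂ G)
    (hgG : ∀ z : Fin m → ℂ,
      g z = G (fun i : Fin (m - 1) =>
        z ⟨i.val + 1, by have := i.isLt; omega⟩ - z ⟨i.val, by have := i.isLt; omega⟩))
    (hgc : ∀ z : Fin m → ℂ, g (z + c) - g z = (∑ j, c j) / (2 * m))
    (f : (Fin m → ℂ) → ℂ)
    (hf : ∀ z : Fin m → ℂ, f z = 1 - (-(∑ j, z j) / (2 * m) + g z) ^ 2) :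
    ∀ z : Fin m → ℂ,
      (∑ j : Fin m, fderiv ℂ f z (Pi.single j 1)) ^ 2 + f (z + c) = 1 := by
  intro z
  have hm0 : (m : ℂ) ≠ 0 := Nat.cast_ne_zero.mpr (by omega)
  -- the continuous linear "sum of coordinates" map
  set S : (Fin m → ℂ) →L[ℂ] ℂ := ∑ j, ContinuousLinearMap.proj j with hSdef
  have hSapp : ∀ v : Fin m → ℂ, S v = ∑ j, v j := by
    intro v
    simp [hSdef]
  -- g is invariant along the all-ones direction
  have hginv : ∀ (w : Fin m → ℂ) (t : ℂ), g (w + t • (fun _ => (1:ℂ))) = g w := by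
    intro w t
    rw [hgG, hgG]
    congr 1
    funext i
    simp only [Pi.add_apply, Pi.smul_apply, smul_eq_mul, mul_one]
    ring
  have hDg : ∀ w : Fin m → ℂ, fderiv ℂ g w (fun _ => (1:ℂ)) = 0 := by
    intro w
    have hcurve : HasDerivAt (fun t : ℂ => w + t • (fun _ => (1:ℂ)))
        ((fun _ => (1:ℂ))) 0 := by
      simpa using ((hasDerivAt_id (0:ℂ)).smul_const (fun _ => (1:ℂ))).const_add w
    have h1 : HasDerivAt (fun t : ℂ => g (w + t • (fun _ => (1:ℂ))))
        (fderiv ℂ g (w + (0:ℂ) • (fun _ => (1:ℂ))) (fun _ => (1:ℂ))) 0 :=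
      (hg _).hasFDerivAt.comp_hasDerivAt 0 hcurve
    have heq : (fun t : ℂ => g (w + t • (fun _ => (1:ℂ)))) = fun _ => g w :=
      funext (hginv w)
    rw [heq] at h1
    have h2 : HasDerivAt (fun _ : ℂ => g w) 0 0 := hasDerivAt_const 0 (g w)
    have h3 := h1.unique h2
    simpa using h3
  set A : ℂ := -(∑ j, z j) / (2 * m) + g z with hA
  -- derivative of f
  have hfe : f = fun w => 1 - (-(∑ j, w j) / (2 * m) + g w) ^ 2 := funext hf
  have hS' : HasFDerivAt (fun w : Fin m → ℂ => ∑ j, w j) S z := by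
    have := S.hasFDerivAt (x := z)
    have h : ⇑S = fun w : Fin m → ℂ => ∑ j, w j := funext hSapp
    rwa [h] at this
  have hh : HasFDerivAt (fun w : Fin m → ℂ => -(∑ j, w j) / (2 * m) + g w)
      (((2 * (m:ℂ))⁻¹ • (-S)) + fderiv ℂ g z) z := by
    have heqf : (fun w : Fin m → ℂ => -(∑ j, w j) / (2 * m) + g w)
        = fun w : Fin m → ℂ => (2 * (m:ℂ))⁻¹ * (-(∑ j, w j)) + g w := by
      funext w; rw [div_eq_inv_mul]
    rw [heqf]
    exact (hS'.neg.const_mul ((2 * (m:ℂ))⁻¹)).add (hg z).hasFDerivAt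
  set L : (Fin m → ℂ) →L[ℂ] ℂ := ((2 * (m:ℂ))⁻¹ • (-S)) + fderiv ℂ g z with hL
  have hf2 : HasFDerivAt f (0 - (A • L + A • L)) z := by
    have hfe' : f = fun w =>
        1 - ((-(∑ j, w j) / (2 * m) + g w) * (-(∑ j, w j) / (2 * m) + g w)) := by
      funext w; rw [hf w]; ring
    rw [hfe']
    exact (hasFDerivAt_const (1:ℂ) z).sub (hh.mul hh)
  have hsingle : ∀ j : Fin m, S (Pi.single j 1) = 1 := by
    intro j
    rw [hSapp]
    simp [Pi.single_apply]
  have hones : (∑ j : Fin m, (Pi.single j 1 : Fin m → ℂ)) = fun _ => (1:ℂ) := by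
    funext i
    simp [Finset.sum_apply, Pi.single_apply]
  have hDgsum : (∑ j : Fin m, fderiv ℂ g z (Pi.single j 1)) = 0 := by
    rw [← map_sum, hones, hDg]
  -- compute the sum of partial derivatives
  have expand : ∀ j : Fin m, fderiv ℂ f z (Pi.single j 1)
      = -(2 * A) * (-(2 * (m:ℂ))⁻¹ + fderiv ℂ g z (Pi.single j 1)) := by
    intro j
    rw [hf2.fderiv]
    simp only [hL, ContinuousLinearMap.sub_apply, ContinuousLinearMap.zero_apply,
      ContinuousLinearMap.smul_apply, ContinuousLinearMap.add_apply,
      ContinuousLinearMap.neg_apply, hsingle, smul_eq_mul]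
    ring
  have hsum : (∑ j : Fin m, fderiv ℂ f z (Pi.single j 1)) = A := by
    simp only [expand]
    rw [← Finset.mul_sum, Finset.sum_add_distrib, hDgsum, Finset.sum_const,
      Finset.card_univ, Fintype.card_fin]
    field_simp
    ring_nf
    field_simp
  -- h(z+c) = h(z)
  have hgz : g (z + c) = g z + (∑ j, c j) / (2 * m) := by
    linear_combination hgc z
  have hAc : -(∑ j, (z + c) j) / (2 * m) + g (z + c) = A := by
    have hsplit : (∑ j, (z + c) j) = (∑ j, z j) + (∑ j, c j) := by
      simp [Finset.sum_add_distrib]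
    rw [hsplit, hgz, hA]
    field_simp
    ring
  rw [hsum, hf (z + c), hAc]
  ring
end

section
/- Let P : ℂ^m → ℂ be an entire function such that ∑_{j=1}^m (∂P/∂z_j(z) + d_j) = 1 for all z, where d₁,…,d_m ∈ ℂ. Then f(z) = sin(d₁z₁+⋯+d_mz_m + P(z)) satisfies (∑_{j=1}^m ∂f/∂z_j(z))² + f(z)² = 1 for all z ∈ ℂ^m. -/
open Complex

theorem stmt15
    (m : ℕ) (d : Fin m → ℂ)
    (P : (Fin m → ℂ) → ℂ) (hP : Differentiable ℂ P)
    (hcond : ∀ z : Fin m → ℂ,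
      (∑ j : Fin m, (fderiv ℂ P z (Pi.single j 1) + d j)) = 1)
    (f : (Fin m → ℂ) → ℂ)
    (hf : ∀ z : Fin m → ℂ, f z = Complex.sin ((∑ j, d j * z j) + P z)) :
    ∀ z : Fin m → ℂ,
      (∑ j : Fin m, fderiv ℂ f z (Pi.single j 1)) ^ 2 + (f z) ^ 2 = 1 := by
  intro z
  set g : (Fin m → ℂ) → ℂ := fun w => (∑ j, d j * w j) + P w with hg
  have hfg : f = fun w => Complex.sin (g w) := funext fun w => hf w
  -- the linear part as a continuous linear map
  set ℓ : (Fin m → ℂ) →L[ℂ] ℂ :=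
    ∑ j : Fin m, d j • (ContinuousLinearMap.proj j : (Fin m → ℂ) →L[ℂ] ℂ) with hℓ
  have hℓapp : ∀ w : Fin m → ℂ, ℓ w = ∑ j, d j * w j := by
    intro w
    simp [hℓ, ContinuousLinearMap.sum_apply]
  have hL : HasFDerivAt (fun w : Fin m → ℂ => ∑ j, d j * w j) ℓ z := by
    have := ℓ.hasFDerivAt (x := z)
    refine this.congr_of_eventuallyEq ?_
    filter_upwards with w using (hℓapp w).symm
  have hgd : HasFDerivAt g (ℓ + fderiv ℂ P z) z := hL.add (hP z).hasFDerivAt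
  have hfd : HasFDerivAt f (Complex.cos (g z) • (ℓ + fderiv ℂ P z)) z := by
    rw [hfg]
    exact (Complex.hasDerivAt_sin (g z)).comp_hasFDerivAt z hgd
  have hfderiv := hfd.fderiv
  rw [hfderiv]
  have hsum : (∑ j : Fin m, (Complex.cos (g z) • (ℓ + fderiv ℂ P z)) (Pi.single j 1)) = Complex.cos (g z) := by
    have key : ∀ j : Fin m, (Complex.cos (g z) • (ℓ + fderiv ℂ P z)) (Pi.single j 1)
        = Complex.cos (g z) * (fderiv ℂ P z (Pi.single j 1) + d j) := by
      intro j
      have hj : ℓ (Pi.single j 1) = d j := by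
        rw [hℓapp]
        simp [Pi.single_apply]
      simp [ContinuousLinearMap.add_apply, hj]
      ring
    rw [Finset.sum_congr rfl (fun j _ => key j), ← Finset.mul_sum, hcond z, mul_one]
  rw [hsum, hf z]
  rw [hg]
  exact Complex.cos_sq_add_sin_sq _
end

section
/- There is no pair of non-constant polynomial functions f, g : ℂ → ℂ with f(z)ⁿ + g(z)ⁿ = 1 for all z ∈ ℂ, when n ≥ 3. -/
open Polynomial UniqueFactorizationMonoid UniqueFactorizationDomain

theorem stmt18 (n : ℕ) (hn : 3 ≤ n) :
    ¬ ∃ p q : Polynomial ℂ, 0 < p.natDegree ∧ 0 < q.natDegree ∧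
      ∀ z : ℂ, (p.eval z) ^ n + (q.eval z) ^ n = 1 := by
  classical
  rintro ⟨p, q, hp, hq, h⟩
  have hp0 : p ≠ 0 := fun h0 => by simp [h0] at hp
  have hq0 : q ≠ 0 := fun h0 => by simp [h0] at hq
  have heq : p ^ n + q ^ n = 1 := by
    apply Polynomial.funext
    intro z
    simpa using h z
  have hpq : IsCoprime p q := by
    refine ⟨p ^ (n - 1), q ^ (n - 1), ?_⟩
    have h1 : p ^ (n - 1) * p = p ^ n := by
      rw [← pow_succ]; congr 1; omega
    have h2 : q ^ (n - 1) * q = q ^ n := by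
      rw [← pow_succ]; congr 1; omega
    rw [h1, h2, heq]
  have ha : p ^ n ≠ 0 := pow_ne_zero _ hp0
  have hb : q ^ n ≠ 0 := pow_ne_zero _ hq0
  have hc : (-1 : Polynomial ℂ) ≠ 0 := by norm_num
  have hsum : p ^ n + q ^ n + (-1) = 0 := by rw [heq]; ring
  have habc := Polynomial.abc ha hb hc (hpq.pow)
    hsum
  have hn0 : 0 < n := by omega
  rcases habc with ⟨h1, h2, _⟩ | ⟨hd, _, _⟩
  · have hrad : radical (p ^ n * q ^ n * (-1)) = radical (p * q) := by
      rw [mul_neg_one, radical_neg, radical_mul (hpq.pow).isRelPrime, radical_pow p hn0.ne',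
        radical_pow q hn0.ne', ← radical_mul hpq.isRelPrime]
    have hle : (radical (p * q)).natDegree ≤ (p * q).natDegree :=
      Polynomial.natDegree_le_of_dvd radical_dvd_self (mul_ne_zero hp0 hq0)
    rw [hrad, Polynomial.natDegree_pow] at h1 h2
    rw [Polynomial.natDegree_mul hp0 hq0] at hle
    nlinarith [h1.trans hle, h2.trans hle]
  · have : (p ^ n).natDegree = 0 :=
      Polynomial.natDegree_eq_zero_of_derivative_eq_zero hd
    rw [Polynomial.natDegree_pow, Nat.mul_eq_zero] at this
    omega
end
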